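/- If C ≥ 0 is such that for every n ∈ ℕ and all independent random variables X_1,…,X_n with E X_k = 0, E X_k² < ∞ and B_n² = Σ_k E X_k² > 0 one has Δ_n ≤ C·( |M_n(1)| + sup_{0<z<1} max{z,1}·L_n(z) ), then C ≥ sup_{1/2<p<1} ( Φ(√((1−p)/p)) − (1−p) ) / ( 1 + √((1−p)³/p) ), and in particular C > 0.5370. -/

import Mathlib

open MeasureTheory ProbabilityTheory Real Set

/-- The standard normal distribution function. -/
noncomputable def Phi (x : ℝ) : ℝ :=
  ∫ t in Set.Iic x, Real.exp (-t ^ 2 / 2) / Real.sqrt (2 * Real.pi)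

/-- `B_n = sqrt (Σ E X_k²)`. -/
noncomputable def Bn {Ω : Type} [MeasurableSpace Ω] (μ : Measure Ω) {n : ℕ}
    (X : Fin n → Ω → ℝ) : ℝ :=
  Real.sqrt (∑ k, ∫ ω, (X k ω) ^ 2 ∂μ)

/-- Uniform distance between the d.f. of the normalized sum and the standard normal d.f. -/
noncomputable def Deltan {Ω : Type} [MeasurableSpace Ω] (μ : Measure Ω) {n : ℕ}
    (X : Fin n → Ω → ℝ) : ℝ :=
  ⨆ x : ℝ, |(μ {ω | (∑ k, X k ω) / Bn μ X < x}).toReal - Phi x|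

/-- `M_n(z) = B_n⁻³ Σ E[X_k³ 1_{|X_k| < z B_n}]`. -/
noncomputable def Mn {Ω : Type} [MeasurableSpace Ω] (μ : Measure Ω) {n : ℕ}
    (X : Fin n → Ω → ℝ) (z : ℝ) : ℝ :=
  (∑ k, ∫ ω, (if |X k ω| < z * Bn μ X then (X k ω) ^ 3 else 0) ∂μ) / (Bn μ X) ^ 3

/-- `L_n(z) = B_n⁻² Σ E[X_k² 1_{|X_k| ≥ z B_n}]` (the Lindeberg fraction). -/
noncomputable def Lnn {Ω : Type} [MeasurableSpace Ω] (μ : Measure Ω) {n : ℕ}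
    (X : Fin n → Ω → ℝ) (z : ℝ) : ℝ :=
  (∑ k, ∫ ω, (if z * Bn μ X ≤ |X k ω| then (X k ω) ^ 2 else 0) ∂μ) / (Bn μ X) ^ 2

/-- Hypotheses on the independent summands: measurability, independence, zero means,
finite second moments, positive total variance. -/
def GoodFamily {Ω : Type} [MeasurableSpace Ω] (μ : Measure Ω) {n : ℕ}
    (X : Fin n → Ω → ℝ) : Prop :=
  (∀ k, Measurable (X k)) ∧
  iIndepFun X μ ∧
  (∀ k, Integrable (fun ω => (X k ω) ^ 2) μ) ∧
  (∀ k, ∫ ω, X k ω ∂μ = 0) ∧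
  0 < ∑ k, ∫ ω, (X k ω) ^ 2 ∂μ

set_option maxHeartbeats 1000000

lemma gauss_eq : (fun t : ℝ => Real.exp (-t ^ 2 / 2) / Real.sqrt (2 * Real.pi))
    = fun t : ℝ => Real.exp (-(1/2) * t ^ 2) / Real.sqrt (2 * Real.pi) := by
  funext t; ring_nf

lemma gauss_integrable :
    Integrable (fun t : ℝ => Real.exp (-t ^ 2 / 2) / Real.sqrt (2 * Real.pi)) := by
  rw [gauss_eq]
  exact (integrable_exp_neg_mul_sq (by norm_num : (0:ℝ) < 1/2)).div_const _

lemma gauss_nonneg (t : ℝ) : 0 ≤ Real.exp (-t ^ 2 / 2) / Real.sqrt (2 * Real.pi) :=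
  div_nonneg (Real.exp_nonneg _) (Real.sqrt_nonneg _)

lemma gauss_total : ∫ t : ℝ, Real.exp (-t ^ 2 / 2) / Real.sqrt (2 * Real.pi) = 1 := by
  rw [gauss_eq, integral_div, integral_gaussian]
  rw [show (π / (1/2)) = 2 * π by ring]
  exact div_self (by positivity)

lemma Phi_nonneg (x : ℝ) : 0 ≤ Phi x :=
  setIntegral_nonneg measurableSet_Iic fun t _ => gauss_nonneg t

lemma Phi_le_one (x : ℝ) : Phi x ≤ 1 := by
  rw [← gauss_total]
  exact setIntegral_le_integral gauss_integrable (Filter.Eventually.of_forall gauss_nonneg)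

lemma Phi_mono {a b : ℝ} (hab : a ≤ b) : Phi a ≤ Phi b :=
  setIntegral_mono_set gauss_integrable.integrableOn
    (Filter.Eventually.of_forall gauss_nonneg) (Filter.Eventually.of_forall (Iic_subset_Iic.2 hab))

lemma Phi_zero : Phi 0 = 1 / 2 := by
  have h2 : (∫ t in Set.Ioi (0:ℝ), Real.exp (-t ^ 2 / 2) / Real.sqrt (2 * Real.pi)) = Phi 0 := by
    rw [Phi]
    have := integral_comp_neg_Iic (c := (0:ℝ))
      (f := fun t : ℝ => Real.exp (-t ^ 2 / 2) / Real.sqrt (2 * Real.pi))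
    simp only [neg_zero] at this
    rw [← this]
    congr 1; funext t; ring_nf
  have h1 : Phi 0 + ∫ t in Set.Ioi (0:ℝ), Real.exp (-t ^ 2 / 2) / Real.sqrt (2 * Real.pi) = 1 := by
    rw [Phi, ← gauss_total,
      ← integral_add_compl measurableSet_Iic gauss_integrable
        (f := fun t : ℝ => Real.exp (-t ^ 2 / 2) / Real.sqrt (2 * Real.pi)),
      compl_Iic]
  rw [h2] at h1; linarith

lemma Phi_lb {t0 : ℝ} (h0 : 0 ≤ t0) :
    1/2 + (t0 - t0^3/6)/Real.sqrt (2*Real.pi) ≤ Phi t0 := by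
  have hsplit : Phi t0 = Phi 0 + ∫ u in Set.Ioc (0:ℝ) t0,
      Real.exp (-u ^ 2 / 2) / Real.sqrt (2 * Real.pi) := by
    rw [Phi, Phi, ← setIntegral_union (Iic_disjoint_Ioc le_rfl) measurableSet_Ioc
      gauss_integrable.integrableOn gauss_integrable.integrableOn, Iic_union_Ioc_eq_Iic h0]
  have hpoly : (∫ u in Set.Ioc (0:ℝ) t0, (1 - u^2/2)/Real.sqrt (2*Real.pi))
      = (t0 - t0^3/6)/Real.sqrt (2*Real.pi) := by
    rw [integral_div, ← intervalIntegral.integral_of_le h0]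
    rw [intervalIntegral.integral_sub (intervalIntegrable_const)
      (((continuous_pow 2).div_const 2).intervalIntegrable _ _)]
    simp [integral_pow]
    ring
  have hmono : (∫ u in Set.Ioc (0:ℝ) t0, (1 - u^2/2)/Real.sqrt (2*Real.pi))
      ≤ ∫ u in Set.Ioc (0:ℝ) t0, Real.exp (-u ^ 2 / 2) / Real.sqrt (2 * Real.pi) := by
    apply setIntegral_mono_on
      (((continuous_const.sub ((continuous_pow 2).div_const 2)).div_const _).integrableOn_Ioc)
      gauss_integrable.integrableOn measurableSet_Ioc
    intro u _
    have h1 : 1 - u^2/2 ≤ Real.exp (-u^2/2) := by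
      have := Real.add_one_le_exp (-u^2/2); linarith
    have h2 : (0:ℝ) < Real.sqrt (2*Real.pi) := Real.sqrt_pos.2 (by positivity)
    gcongr; exact h1
  rw [hsplit, Phi_zero, hpoly] at *
  linarith

lemma key (C : ℝ) (hC : 0 ≤ C)
    (h : ∀ (Ω : Type) (mΩ : MeasurableSpace Ω) (μ : Measure Ω), IsProbabilityMeasure μ →
      ∀ (n : ℕ) (X : Fin n → Ω → ℝ), GoodFamily μ X →
        Deltan μ X ≤
          C * (|Mn μ X 1| +
            sSup ((fun z => max z 1 * Lnn μ X z) '' Set.Ioo (0 : ℝ) 1)))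
    (p : ℝ) (hp : p ∈ Set.Ioo (1/2 : ℝ) 1) :
    (Phi (Real.sqrt ((1 - p) / p)) - (1 - p)) / (1 + Real.sqrt ((1 - p) ^ 3 / p)) ≤ C := by
  obtain ⟨hp1, hp2⟩ := hp
  set q : ℝ := 1 - p with hqdef
  have hq0 : 0 < q := by simp [hqdef]; linarith
  have hp0 : 0 < p := by linarith
  have hqp : q < p := by simp [hqdef]; linarith
  set t : ℝ := Real.sqrt (q / p) with htdef
  set s : ℝ := Real.sqrt (p / q) with hsdef
  have ht2 : t ^ 2 = q / p := Real.sq_sqrt (by positivity)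
  have hs2 : s ^ 2 = p / q := Real.sq_sqrt (by positivity)
  have ht0 : 0 < t := Real.sqrt_pos.2 (by positivity)
  have hs0 : 0 < s := Real.sqrt_pos.2 (by positivity)
  have ht1 : t < 1 := by
    rw [htdef, Real.sqrt_lt' one_pos]
    rw [one_pow, div_lt_one hp0]; linarith
  have hs1 : 1 ≤ s := by
    rw [hsdef, Real.le_sqrt (by norm_num) (by positivity)]
    rw [one_pow, le_div_iff₀ hq0]; linarith
  have hpt2 : p * t ^ 2 = q := by rw [ht2]; field_simp
  have hqs2 : q * s ^ 2 = p := by rw [hs2]; field_simp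
  have hpt : p * t = Real.sqrt (p * q) := by
    have : p * t = Real.sqrt (p ^ 2) * Real.sqrt (q / p) := by
      rw [Real.sqrt_sq hp0.le]
    rw [this, ← Real.sqrt_mul (by positivity)]
    congr 1; field_simp
  have hqs : q * s = Real.sqrt (p * q) := by
    have : q * s = Real.sqrt (q ^ 2) * Real.sqrt (p / q) := by
      rw [Real.sqrt_sq hq0.le]
    rw [this, ← Real.sqrt_mul (by positivity)]
    congr 1; field_simp
  -- the measure and the random variable
  set μ : Measure Bool :=
    (ENNReal.ofReal p) • Measure.dirac true + (ENNReal.ofReal q) • Measure.dirac false with hμdef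
  set X : Fin 1 → Bool → ℝ := fun _ b => if b then t else -s with hXdef
  have hμt : μ {true} = ENNReal.ofReal p := by
    simp [hμdef, Measure.dirac_apply]
  have hμf : μ {false} = ENNReal.ofReal q := by
    simp [hμdef, Measure.dirac_apply]
  haveI hprob : IsProbabilityMeasure μ := by
    constructor
    simp [hμdef]
    rw [← ENNReal.ofReal_add hp0.le hq0.le]
    rw [show p + q = 1 by simp [hqdef]]
    simp
  have hint : ∀ f : Bool → ℝ, ∫ b, f b ∂μ = p * f true + q * f false := by
    intro f
    rw [integral_fintype (Integrable.of_finite)]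
    simp [Measure.real, hμt, hμf, ENNReal.toReal_ofReal hp0.le, ENNReal.toReal_ofReal hq0.le]
    try ring
  have hXt : X 0 true = t := rfl
  have hXf : X 0 false = -s := rfl
  have hvar : (∑ k : Fin 1, ∫ ω, (X k ω) ^ 2 ∂μ) = 1 := by
    rw [Fin.sum_univ_one, hint]
    rw [hXt, hXf]
    have : (-s) ^ 2 = s ^ 2 := by ring
    rw [this]
    rw [hpt2]; nlinarith [hqs2]
  have hB : Bn μ X = 1 := by rw [Bn, hvar, Real.sqrt_one]
  have hgood : GoodFamily μ X := by
    refine ⟨fun k => ?_, iIndepFun.of_subsingleton, fun k => Integrable.of_finite,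
      fun k => ?_, by rw [hvar]; norm_num⟩
    · exact measurable_from_top
    · have hk : X k = X 0 := by rw [Subsingleton.elim k 0]
      rw [hk, hint, hXt, hXf, hpt]
      rw [show q * -s = -(q*s) by ring, hqs]; ring
  -- the Delta lower bound
  have hPhiHalf : 1/2 ≤ Phi t := by rw [← Phi_zero]; exact Phi_mono ht0.le
  have hq12 : q < 1/2 := by simp [hqdef]; linarith
  have hset : {ω : Bool | (∑ k : Fin 1, X k ω) / Bn μ X < t} = {false} := by
    ext b
    cases b
    · simp only [Fin.sum_univ_one, hB, div_one, hXf, Set.mem_setOf_eq, Set.mem_singleton_iff]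
      simpa using (by linarith : -s < t)
    · simp only [Fin.sum_univ_one, hB, div_one, hXt, Set.mem_setOf_eq, Set.mem_singleton_iff]
      simpa using lt_irrefl t
  have hμfR : (μ {false}).toReal = q := by rw [hμf, ENNReal.toReal_ofReal hq0.le]
  have hbdd : BddAbove (Set.range fun x =>
      |(μ {ω | (∑ k : Fin 1, X k ω) / Bn μ X < x}).toReal - Phi x|) := by
    refine ⟨1, ?_⟩
    rintro _ ⟨x, rfl⟩
    have h1 : (μ {ω | (∑ k : Fin 1, X k ω) / Bn μ X < x}).toReal ≤ 1 := by
      have h2 := prob_le_one (μ := μ) (s := {ω | (∑ k : Fin 1, X k ω) / Bn μ X < x})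
      have := ENNReal.toReal_mono (by simp) h2
      simpa using this
    have h0 : (0:ℝ) ≤ (μ {ω | (∑ k : Fin 1, X k ω) / Bn μ X < x}).toReal := ENNReal.toReal_nonneg
    exact abs_le.2 ⟨by linarith [Phi_le_one x], by linarith [Phi_nonneg x]⟩
  have hDelta : Phi t - q ≤ Deltan μ X := by
    have hle := le_ciSup hbdd t
    have heq : |(μ {ω | (∑ k : Fin 1, X k ω) / Bn μ X < t}).toReal - Phi t| = Phi t - q := by
      rw [hset, hμfR, abs_sub_comm, abs_of_nonneg (by linarith)]
    rw [Deltan]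
    rw [← heq]
    exact hle
  -- Mn
  have hM : Mn μ X 1 = Real.sqrt (q ^ 3 / p) := by
    rw [Mn, hB]
    simp only [one_pow, div_one, one_mul, Fin.sum_univ_one]
    rw [hint]
    rw [hXt, hXf, abs_of_pos ht0, abs_neg, abs_of_pos hs0]
    rw [if_pos ht1, if_neg (not_lt.2 hs1)]
    rw [mul_zero, add_zero]
    have h1 : p * t ^ 3 = (p * t) * t ^ 2 := by ring
    rw [h1, hpt, ht2, ← Real.sqrt_sq (le_of_lt (div_pos hq0 hp0)),
      ← Real.sqrt_mul (by positivity)]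
    congr 1; field_simp
  -- Lnn bound
  have hS : sSup ((fun z => max z 1 * Lnn μ X z) '' Set.Ioo (0 : ℝ) 1) ≤ 1 := by
    apply Real.sSup_le _ (by norm_num)
    rintro _ ⟨z, hz, rfl⟩
    show max z 1 * Lnn μ X z ≤ 1
    rw [max_eq_right hz.2.le, one_mul, Lnn, hB]
    simp only [one_pow, div_one, mul_one, Fin.sum_univ_one]
    rw [hint, hXt, hXf, abs_of_pos ht0, abs_neg, abs_of_pos hs0]
    have b1 : (if z ≤ t then t ^ 2 else 0) ≤ t ^ 2 := by
      split
      · exact le_refl _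
      · positivity
    have b2 : (if z ≤ s then (-s) ^ 2 else 0) ≤ s ^ 2 := by
      split
      · nlinarith
      · positivity
    have hpq1 : p + q = 1 := by simp [hqdef]
    have c1 : p * (if z ≤ t then t ^ 2 else 0) ≤ p * t ^ 2 :=
      mul_le_mul_of_nonneg_left b1 hp0.le
    have c2 : q * (if z ≤ s then (-s) ^ 2 else 0) ≤ q * s ^ 2 :=
      mul_le_mul_of_nonneg_left b2 hq0.le
    linarith [c1, c2, hpt2, hqs2]
  -- conclude
  have hR := h Bool inferInstance μ hprob 1 X hgood
  have hfinal : Phi t - q ≤ C * (1 + Real.sqrt (q ^ 3 / p)) := by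
    have h2 : C * (|Mn μ X 1| +
        sSup ((fun z => max z 1 * Lnn μ X z) '' Set.Ioo (0 : ℝ) 1))
        ≤ C * (Real.sqrt (q ^ 3 / p) + 1) := by
      apply mul_le_mul_of_nonneg_left _ hC
      rw [hM, abs_of_nonneg (Real.sqrt_nonneg _)]
      linarith [hS]
    calc Phi t - q ≤ Deltan μ X := hDelta
      _ ≤ _ := hR
      _ ≤ C * (Real.sqrt (q ^ 3 / p) + 1) := h2
      _ = C * (1 + Real.sqrt (q ^ 3 / p)) := by ring
  rw [div_le_iff₀ (by positivity)]
  exact hfinal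

theorem lower_bound_optimistic_rozovskii_1_1 (C : ℝ) (hC : 0 ≤ C)
    (h : ∀ (Ω : Type) (mΩ : MeasurableSpace Ω) (μ : Measure Ω), IsProbabilityMeasure μ →
      ∀ (n : ℕ) (X : Fin n → Ω → ℝ), GoodFamily μ X →
        Deltan μ X ≤
          C * (|Mn μ X 1| +
            sSup ((fun z => max z 1 * Lnn μ X z) '' Set.Ioo (0 : ℝ) 1))) :
    sSup ((fun p => (Phi (Real.sqrt ((1 - p) / p)) - (1 - p)) /
        (1 + Real.sqrt ((1 - p) ^ 3 / p))) '' Set.Ioo (1/2 : ℝ) 1) ≤ C ∧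
    0.5370 < C := by
  constructor
  · apply Real.sSup_le _ hC
    rintro _ ⟨p, hp, rfl⟩
    exact key C hC h p hp
  · have hk := key C hC h 0.9678 (by norm_num)
    have hT : (0.182404323 : ℝ) ≤ Real.sqrt ((1 - 0.9678) / 0.9678) :=
      (Real.le_sqrt (by norm_num) (by norm_num)).2 (by norm_num)
    have hP1 : Phi (0.182404323 : ℝ) ≤ Phi (Real.sqrt ((1 - 0.9678) / 0.9678)) := Phi_mono hT
    have hP2 : 1/2 + ((0.182404323:ℝ) - (0.182404323:ℝ)^3/6)/Real.sqrt (2*Real.pi)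
        ≤ Phi (0.182404323 : ℝ) := Phi_lb (by norm_num)
    have hs : Real.sqrt (2*Real.pi) ≤ 2.50662842 := by
      rw [show (2.50662842:ℝ) = Real.sqrt (2.50662842^2) from (Real.sqrt_sq (by norm_num)).symm]
      apply Real.sqrt_le_sqrt
      nlinarith [Real.pi_lt_d6]
    have hsp : (0:ℝ) < Real.sqrt (2*Real.pi) := Real.sqrt_pos.2 (by positivity)
    have hd : ((0.182404323:ℝ) - (0.182404323:ℝ)^3/6)/(2.50662842:ℝ)
        ≤ ((0.182404323:ℝ) - (0.182404323:ℝ)^3/6)/Real.sqrt (2*Real.pi) :=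
      div_le_div_of_nonneg_left (by norm_num) hsp hs
    have hr : Real.sqrt ((1 - 0.9678)^3 / 0.9678) ≤ (0.0058734193:ℝ) := by
      rw [show (0.0058734193:ℝ) = Real.sqrt (0.0058734193^2) from (Real.sqrt_sq (by norm_num)).symm]
      apply Real.sqrt_le_sqrt
      norm_num
    have hnum : (1/2 + ((0.182404323:ℝ) - (0.182404323:ℝ)^3/6)/(2.50662842:ℝ) - 0.0322 : ℝ)
        ≤ Phi (Real.sqrt ((1 - 0.9678) / 0.9678)) - (1 - 0.9678) := by
      linarith
    have hA : (0:ℝ) < 1/2 + ((0.182404323:ℝ) - (0.182404323:ℝ)^3/6)/(2.50662842:ℝ) - 0.0322 := by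
      norm_num
    have hden : (1 + Real.sqrt ((1 - 0.9678)^3 / 0.9678) : ℝ) ≤ 1 + 0.0058734193 := by linarith
    have hfrac : (1/2 + ((0.182404323:ℝ) - (0.182404323:ℝ)^3/6)/(2.50662842:ℝ) - 0.0322)
          / (1 + 0.0058734193 : ℝ)
        ≤ (Phi (Real.sqrt ((1 - 0.9678) / 0.9678)) - (1 - 0.9678)) /
          (1 + Real.sqrt ((1 - 0.9678)^3 / 0.9678)) :=
      div_le_div₀ (by linarith) hnum (by positivity) hden
    have hfin : (0.5370:ℝ) < (1/2 + ((0.182404323:ℝ) - (0.182404323:ℝ)^3/6)/(2.50662842:ℝ)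
        - 0.0322) / (1 + 0.0058734193 : ℝ) := by norm_num
    linarith
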